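/- For any finite Markov decision process (S, A, P, R, γ), any stationary policy π : S → Δ(A), and any two probability distributions ρ₁, ρ₂ ∈ Δ(S) over initial states, the performance gap satisfies |V^π(ρ₁) − V^π(ρ₂)| ≤ W_{d^π}(ρ₁, ρ₂), where d^π is the π-bisimulation metric and V^π(ρ) = Σ_s ρ(s) V^π(s). -/
import Mathlib


/-- A probability distribution on a finite set, represented as a nonnegative
function summing to one. -/
def IsProb {X : Type*} [Fintype X] (μ : X → ℝ) : Prop :=
  (∀ x, 0 ≤ μ x) ∧ ∑ x, μ x = 1

/-- A coupling of `μ ∈ Δ(X)` and `ν ∈ Δ(Y)`: a probability distribution on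
`X × Y` whose first marginal is `μ` and whose second marginal is `ν`. -/
def IsCoupling {X Y : Type*} [Fintype X] [Fintype Y]
    (θ : X × Y → ℝ) (μ : X → ℝ) (ν : Y → ℝ) : Prop :=
  IsProb θ ∧ (∀ x, ∑ y, θ (x, y) = μ x) ∧ (∀ y, ∑ x, θ (x, y) = ν y)

/-- The 1-Wasserstein (optimal transport) cost between `μ ∈ Δ(X)` and `ν ∈ Δ(Y)`
with ground cost `d`. -/
noncomputable def Wass {X Y : Type*} [Fintype X] [Fintype Y]
    (d : X → Y → ℝ) (μ : X → ℝ) (ν : Y → ℝ) : ℝ :=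
  sInf {c | ∃ θ : X × Y → ℝ, IsCoupling θ μ ν ∧ c = ∑ p : X × Y, θ p * d p.1 p.2}

/-- `R^π_s = ∑ₐ π(a|s) R(s,a)`, the expected immediate reward of policy `π` at `s`. -/
def Rpi {S A : Type*} [Fintype A] (R : S → A → ℝ) (π : S → A → ℝ) (s : S) : ℝ :=
  ∑ a, π s a * R s a

/-- `P^π_s(s') = ∑ₐ π(a|s) P(s'|s,a)`, the state-transition kernel induced by `π`. -/
def Ppi {S A : Type*} [Fintype A] (P : S → A → S → ℝ) (π : S → A → ℝ) (s s' : S) : ℝ :=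
  ∑ a, π s a * P s a s'

/-- The Bellman operator of policy `π`:
`(T V)(s) = R^π_s + γ ∑_{s'} P^π_s(s') V(s')`. -/
def bellman {S A : Type*} [Fintype S] [Fintype A]
    (γ : ℝ) (R : S → A → ℝ) (P : S → A → S → ℝ) (π : S → A → ℝ)
    (V : S → ℝ) (s : S) : ℝ :=
  Rpi R π s + γ * ∑ s', Ppi P π s s' * V s'

/-- The π-bisimulation operator:
`F(d)(s,t) = |R^π_s − R^π_t| + γ W_d(P^π_s, P^π_t)`. -/
noncomputable def bisimF {S A : Type*} [Fintype S] [Fintype A]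
    (γ : ℝ) (R : S → A → ℝ) (P : S → A → S → ℝ) (π : S → A → ℝ)
    (d : S → S → ℝ) (s t : S) : ℝ :=
  |Rpi R π s - Rpi R π t| + γ * Wass d (Ppi P π s) (Ppi P π t)

lemma prod_coupling {X Y : Type*} [Fintype X] [Fintype Y]
    {μ : X → ℝ} {ν : Y → ℝ} (hμ : IsProb μ) (hν : IsProb ν) :
    IsCoupling (fun p : X × Y => μ p.1 * ν p.2) μ ν := by
  obtain ⟨hμ0, hμ1⟩ := hμ; obtain ⟨hν0, hν1⟩ := hν
  refine ⟨⟨fun p => mul_nonneg (hμ0 _) (hν0 _), ?_⟩, fun x => ?_, fun y => ?_⟩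
  · rw [Fintype.sum_prod_type]
    simp [← Finset.mul_sum, hν1, hμ1]
  · simp [← Finset.mul_sum, hν1]
  · simp [← Finset.sum_mul, hμ1]

lemma wass_lb {X Y : Type*} [Fintype X] [Fintype Y]
    {d : X → Y → ℝ} {μ : X → ℝ} {ν : Y → ℝ} (hμ : IsProb μ) (hν : IsProb ν)
    (f : X → ℝ) (g : Y → ℝ) (c : ℝ)
    (h : ∀ x y, |f x - g y| ≤ d x y + c) :
    |(∑ x, μ x * f x) - ∑ y, ν y * g y| ≤ Wass d μ ν + c := by
  rw [← sub_le_iff_le_add]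
  refine le_csInf ⟨∑ p : X × Y, (μ p.1 * ν p.2) * d p.1 p.2,
    ⟨fun p : X × Y => μ p.1 * ν p.2, prod_coupling hμ hν, rfl⟩⟩ ?_
  rintro b ⟨θ, ⟨⟨hθ0, hθ1⟩, hm1, hm2⟩, rfl⟩
  have e1 : (∑ x, μ x * f x) = ∑ p : X × Y, θ p * f p.1 := by
    rw [Fintype.sum_prod_type]
    refine Finset.sum_congr rfl fun x _ => ?_
    rw [← hm1 x, Finset.sum_mul]
  have e2 : (∑ y, ν y * g y) = ∑ p : X × Y, θ p * g p.2 := by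
    rw [Fintype.sum_prod_type_right]
    refine Finset.sum_congr rfl fun y _ => ?_
    rw [← hm2 y, Finset.sum_mul]
  rw [e1, e2, ← Finset.sum_sub_distrib, sub_le_iff_le_add]
  calc |∑ p : X × Y, (θ p * f p.1 - θ p * g p.2)|
      ≤ ∑ p : X × Y, |θ p * f p.1 - θ p * g p.2| := Finset.abs_sum_le_sum_abs _ _
    _ ≤ ∑ p : X × Y, θ p * (d p.1 p.2 + c) := by
        refine Finset.sum_le_sum fun p _ => ?_
        rw [← mul_sub, abs_mul, abs_of_nonneg (hθ0 p)]
        exact mul_le_mul_of_nonneg_left (h p.1 p.2) (hθ0 p)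
    _ = (∑ p : X × Y, θ p * d p.1 p.2) + c := by
        simp [mul_add, Finset.sum_add_distrib, ← Finset.sum_mul, hθ1]

/-- for any finite MDP, stationary policy `π`, and initial-state
distributions `ρ₁, ρ₂`, the performance gap satisfies
`|V^π(ρ₁) − V^π(ρ₂)| ≤ W_{d^π}(ρ₁, ρ₂)`. -/
theorem abs_value_dist_sub_le_wasserstein_bisim {S A : Type*} [Fintype S] [Fintype A]
    (γ : ℝ) (hγ0 : 0 < γ) (hγ1 : γ < 1)
    (P : S → A → S → ℝ) (hP : ∀ s a, IsProb (P s a))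
    (R : S → A → ℝ) (hR : ∀ s a, 0 ≤ R s a ∧ R s a ≤ 1 - γ)
    (π : S → A → ℝ) (hπ : ∀ s, IsProb (π s))
    -- `V` is the (unique) fixed point of the Bellman operator of `π`
    (V : S → ℝ) (hV : ∀ s, V s = bellman γ R P π V s)
    -- `dpi` is the (unique) fixed point of the π-bisimulation operator
    (dpi : S → S → ℝ) (hd0 : ∀ s t, 0 ≤ dpi s t)
    (hdfix : ∀ s t, dpi s t = bisimF γ R P π dpi s t)
    (ρ₁ ρ₂ : S → ℝ) (hρ₁ : IsProb ρ₁) (hρ₂ : IsProb ρ₂) :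
    |(∑ s, ρ₁ s * V s) - ∑ s, ρ₂ s * V s| ≤ Wass dpi ρ₁ ρ₂ := by
  rcases isEmpty_or_nonempty S with hS | hS
  · -- empty state space: the coupling set is empty and sInf ∅ = 0
    have : {c | ∃ θ : S × S → ℝ, IsCoupling θ ρ₁ ρ₂ ∧
        c = ∑ p : S × S, θ p * dpi p.1 p.2} = ∅ := by
      ext c
      simp only [Set.mem_setOf_eq, Set.mem_empty_iff_false, iff_false, not_exists]
      rintro θ ⟨⟨⟨-, h1⟩, -, -⟩, -⟩
      simp [Finset.univ_eq_empty] at h1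
    rw [Wass, this, Real.sInf_empty]
    simp [Finset.univ_eq_empty]
  · have hPpi : ∀ s, IsProb (Ppi P π s) := by
      intro s
      constructor
      · intro s'
        exact Finset.sum_nonneg fun a _ => mul_nonneg ((hπ s).1 a) ((hP s a).1 s')
      · simp only [Ppi]
        rw [Finset.sum_comm]
        calc ∑ a, ∑ s', π s a * P s a s'
            = ∑ a, π s a := by
              refine Finset.sum_congr rfl fun a _ => ?_
              rw [← Finset.mul_sum, (hP s a).2, mul_one]
          _ = 1 := (hπ s).2
    set M : ℝ := Finset.univ.sup' (Finset.univ_nonempty (α := S × S))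
      (fun p : S × S => |V p.1 - V p.2| - dpi p.1 p.2) with hMdef
    have hMle : ∀ s t : S, |V s - V t| ≤ dpi s t + M := by
      intro s t
      have h := Finset.le_sup' (fun p : S × S => |V p.1 - V p.2| - dpi p.1 p.2)
        (Finset.mem_univ (s, t))
      rw [← hMdef] at h
      simp only at h
      linarith
    have step : ∀ s t : S, |V s - V t| ≤ dpi s t + γ * M := by
      intro s t
      rw [hV s, hV t, hdfix s t, bellman, bellman, bisimF]
      have h2 : |(∑ s', Ppi P π s s' * V s') - ∑ s', Ppi P π t s' * V s'|
          ≤ Wass dpi (Ppi P π s) (Ppi P π t) + M :=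
        wass_lb (hPpi s) (hPpi t) V V M hMle
      have habs : |(Rpi R π s + γ * ∑ s', Ppi P π s s' * V s')
          - (Rpi R π t + γ * ∑ s', Ppi P π t s' * V s')|
          ≤ |Rpi R π s - Rpi R π t|
            + γ * |(∑ s', Ppi P π s s' * V s') - ∑ s', Ppi P π t s' * V s'| := by
        have := abs_add_le (Rpi R π s - Rpi R π t)
          (γ * ((∑ s', Ppi P π s s' * V s') - ∑ s', Ppi P π t s' * V s'))
        rw [abs_mul, abs_of_pos hγ0] at this
        calc _ = |(Rpi R π s - Rpi R π t)
              + γ * ((∑ s', Ppi P π s s' * V s') - ∑ s', Ppi P π t s' * V s')| := by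
              ring_nf
          _ ≤ _ := this
      refine habs.trans ?_
      have := mul_le_mul_of_nonneg_left h2 hγ0.le
      linarith [this]
    have hMle2 : M ≤ γ * M := by
      refine Finset.sup'_le _ _ fun p _ => ?_
      have := step p.1 p.2
      linarith
    have hM0 : M ≤ 0 := by nlinarith
    have key : ∀ s t : S, |V s - V t| ≤ dpi s t + 0 := by
      intro s t
      have := step s t
      nlinarith
    simpa using wass_lb hρ₁ hρ₂ V V 0 key
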